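/- Let X, E be real Banach spaces, L : X → E a Fredholm operator of index 0, i : X → E and j : E → X* injective continuous linear maps such that ⟨u, v⟩ := j(i(u))(v) is a positive definite symmetric bilinear form on X, and such that j ∘ L : X → X* is symmetric. Then E decomposes as the direct sum E = i(ker L) ⊕ Im L. -/

import Mathlib

/-!
STATEMENT 5: let `X, E` be Banach spaces, `L : X → E` Fredholm of index `0`,
`i : X → E` and `j : E → X*` injective continuous linear maps such that
`⟨u, v⟩ := j(i(u))(v)` is a symmetric positive definite bilinear form on `X`, and
such that `j ∘ L : X → X*` is symmetric.  Then `E = i(ker L) ⊕ Im L`.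

Fredholmness of index 0 is expressed as: `ker L` is finite dimensional, `Im L` is
closed, and the cokernel `E ⧸ Im L` is finite dimensional of the same dimension as
`ker L`.  The direct sum decomposition is expressed as `IsCompl`.
-/

theorem image_ker_compl_range_of_fredholm_index_zero
    {X E : Type*} [NormedAddCommGroup X] [NormedSpace ℝ X] [CompleteSpace X]
    [NormedAddCommGroup E] [NormedSpace ℝ E] [CompleteSpace E]
    (L : X →L[ℝ] E)
    -- L is Fredholm of index zero:
    (hker : FiniteDimensional ℝ (LinearMap.ker (L : X →ₗ[ℝ] E)))
    (hclosed : IsClosed (LinearMap.range (L : X →ₗ[ℝ] E) : Set E))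
    (hcoker : FiniteDimensional ℝ (E ⧸ LinearMap.range (L : X →ₗ[ℝ] E)))
    (hindex : Module.finrank ℝ (LinearMap.ker (L : X →ₗ[ℝ] E))
      = Module.finrank ℝ (E ⧸ LinearMap.range (L : X →ₗ[ℝ] E)))
    (i : X →L[ℝ] E) (hi : Function.Injective i)
    (j : E →L[ℝ] (X →L[ℝ] ℝ)) (hj : Function.Injective j)
    -- ⟨u,v⟩ = j(i u) v is a symmetric positive definite inner product on X:
    (hsymm : ∀ u v : X, j (i u) v = j (i v) u)
    (hpos : ∀ u : X, u ≠ 0 → 0 < j (i u) u)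
    -- j ∘ L : X → X* is symmetric:
    (hjL : ∀ u v : X, j (L u) v = j (L v) u)
    : IsCompl (Submodule.map (i : X →ₗ[ℝ] E) (LinearMap.ker (L : X →ₗ[ℝ] E))) (LinearMap.range (L : X →ₗ[ℝ] E)) := by

  classical
  set p := Submodule.map (i : X →ₗ[ℝ] E) (LinearMap.ker (L : X →ₗ[ℝ] E)) with hp
  set q := LinearMap.range (L : X →ₗ[ℝ] E) with hq
  -- Note: the continuous linear map range vs linear map range
  have hqker : LinearMap.ker (q.mkQ) = q := Submodule.ker_mkQ q
  -- disjointness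
  have hdisj : Disjoint p q := by
    rw [Submodule.disjoint_def]
    rintro x ⟨u, hu, rfl⟩ hxq
    have hu0 : L u = 0 := hu
    obtain ⟨w, hw⟩ := hxq
    by_contra hne
    have hune : u ≠ 0 := by
      intro h; apply hne; simp [h]
    have h1 : j (i u) u = 0 := by
      have : j (i u) u = j (L w) u := congrArg (fun y => j y u) hw.symm
      rw [this, hjL w u, hu0]
      simp
    exact absurd h1 (ne_of_gt (hpos u hune))
  constructor
  · exact hdisj
  · -- codisjointness
    rw [codisjoint_iff]
    have hmap : Submodule.map q.mkQ p = ⊤ := by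
      have hfin : FiniteDimensional ℝ p := by
        have : FiniteDimensional ℝ (LinearMap.ker (L : X →ₗ[ℝ] E)) := hker
        exact Module.Finite.map _ _
      -- the composition p → E ⧸ q is injective
      set g : p →ₗ[ℝ] (E ⧸ q) := q.mkQ.comp p.subtype with hg
      have hginj : Function.Injective g := by
        rw [← LinearMap.ker_eq_bot]
        rw [Submodule.eq_bot_iff]
        rintro ⟨x, hx⟩ hxg
        have hxq : x ∈ q := by
          have : q.mkQ x = 0 := hxg
          rwa [← hqker, LinearMap.mem_ker]
        have : x = 0 := (Submodule.disjoint_def.mp hdisj) x hx hxq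
        simp [this]
      have hrange : LinearMap.range g = Submodule.map q.mkQ p := by
        rw [hg, LinearMap.range_comp, Submodule.range_subtype]
      have hrk : Module.finrank ℝ (Submodule.map q.mkQ p) = Module.finrank ℝ (E ⧸ q) := by
        rw [← hrange]
        rw [LinearMap.finrank_range_of_inj hginj]
        -- finrank p = finrank ker L
        have hpk : Module.finrank ℝ p = Module.finrank ℝ (LinearMap.ker (L : X →ₗ[ℝ] E)) := by
          have hiinj : Function.Injective (i : X →ₗ[ℝ] E) := hi
          exact ((Submodule.equivMapOfInjective _ hiinj
            (LinearMap.ker (L : X →ₗ[ℝ] E))).symm.finrank_eq)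
        rw [hpk, hindex]
      exact Submodule.eq_top_of_finrank_eq hrk
    have := congrArg (Submodule.comap q.mkQ) hmap
    rwa [Submodule.comap_map_eq, hqker, Submodule.comap_top] at this
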